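/- Let u, w be positive functions in H¹₀(Ω) ∩ C¹(Ω) and set φ = ((u² + w²)/2)^{1/2}. Then, pointwise where u and w are differentiable and positive, H(∇φ)² ≤ ½ H(∇u)² + ½ H(∇w)², where H is a convex absolutely one-homogeneous gauge function. Moreover equality forces ∇(log u) = ∇(log w) at that point, provided the sublevel sets of H are strictly convex. -/

import Mathlib

open MeasureTheory Set

open InnerProductSpace in

set_option maxHeartbeats 2000000 in
theorem pointwise_convexity_inequality (n : ℕ) (H : EuclideanSpace ℝ (Fin n) → ℝ) (a b : ℝ)
    (ha : 0 < a) (hab : a ≤ b)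
    (hconv : ConvexOn ℝ univ H)
    (hhom : ∀ (t : ℝ) (ξ : EuclideanSpace ℝ (Fin n)), H (t • ξ) = |t| * H ξ)
    (hlow : ∀ ξ : EuclideanSpace ℝ (Fin n), a * ‖ξ‖ ≤ H ξ)
    (hup : ∀ ξ : EuclideanSpace ℝ (Fin n), H ξ ≤ b * ‖ξ‖)
    (hsc : ∀ t > 0, StrictConvex ℝ {ξ : EuclideanSpace ℝ (Fin n) | H ξ ≤ t})
    (u w : EuclideanSpace ℝ (Fin n) → ℝ) (x : EuclideanSpace ℝ (Fin n))
    (hux : 0 < u x) (hwx : 0 < w x)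
    (hud : DifferentiableAt ℝ u x) (hwd : DifferentiableAt ℝ w x)
    (φ : EuclideanSpace ℝ (Fin n) → ℝ)
    (hφ : φ = fun y => Real.sqrt ((u y ^ 2 + w y ^ 2) / 2)) :
    (H (gradient φ x)) ^ 2 ≤ (1 / 2) * (H (gradient u x)) ^ 2 + (1 / 2) * (H (gradient w x)) ^ 2 ∧
    ((H (gradient φ x)) ^ 2 = (1 / 2) * (H (gradient u x)) ^ 2 + (1 / 2) * (H (gradient w x)) ^ 2 →
      (u x)⁻¹ • gradient u x = (w x)⁻¹ • gradient w x) := by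
  -- notation
  set g := gradient u x with hg
  set h := gradient w x with hh
  have hqpos : (0:ℝ) < (u x ^ 2 + w x ^ 2) / 2 := by positivity
  set φx := Real.sqrt ((u x ^ 2 + w x ^ 2) / 2) with hφx
  have hφxpos : 0 < φx := Real.sqrt_pos.mpr hqpos
  have hφxsq : φx ^ 2 = (u x ^ 2 + w x ^ 2) / 2 := Real.sq_sqrt hqpos.le
  set l := u x / (2 * φx) with hl
  set m := w x / (2 * φx) with hm
  have hlpos : 0 < l := by positivity
  have hmpos : 0 < m := by positivity
  have hlm : l ^ 2 + m ^ 2 = 1 / 2 := by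
    rw [hl, hm]
    field_simp
    nlinarith [hφxsq]
  -- gradient computation
  have hgrad : gradient φ x = l • g + m • h := by
    have hq : HasFDerivAt (fun y => (u y ^ 2 + w y ^ 2) / 2)
        (u x • fderiv ℝ u x + w x • fderiv ℝ w x) x := by
      have heq : (fun y => (u y ^ 2 + w y ^ 2) / 2)
          = fun y => (2⁻¹:ℝ) • (u y * u y + w y * w y) := by
        ext y; simp; ring
      rw [heq]
      have := ((hud.hasFDerivAt.mul hud.hasFDerivAt).add
        (hwd.hasFDerivAt.mul hwd.hasFDerivAt)).const_smul (2⁻¹:ℝ)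
      refine HasFDerivAt.congr_fderiv this ?_
      ext v
      simp
      ring
    have hs := (Real.hasDerivAt_sqrt hqpos.ne').comp_hasFDerivAt x hq
    rw [hφ]
    have hs' : HasFDerivAt (fun y => Real.sqrt ((u y ^ 2 + w y ^ 2) / 2))
        ((1 / (2 * Real.sqrt ((u x ^ 2 + w x ^ 2) / 2))) •
          (u x • fderiv ℝ u x + w x • fderiv ℝ w x)) x := hs
    have h1 : toDual ℝ (EuclideanSpace ℝ (Fin n)) g = fderiv ℝ u x := by
      simp [hg, gradient]
    have h2 : toDual ℝ (EuclideanSpace ℝ (Fin n)) h = fderiv ℝ w x := by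
      simp [hh, gradient]
    have hfd : (1 / (2 * Real.sqrt ((u x ^ 2 + w x ^ 2) / 2))) •
          (u x • fderiv ℝ u x + w x • fderiv ℝ w x)
        = toDual ℝ (EuclideanSpace ℝ (Fin n)) (l • g + m • h) := by
      rw [map_add, _root_.map_smul, _root_.map_smul, h1, h2]
      ext v
      simp only [ContinuousLinearMap.add_apply, ContinuousLinearMap.coe_smul',
        Pi.smul_apply, smul_eq_mul, hl, hm, ← hφx]
      field_simp
    have hgr : HasGradientAt (fun y => Real.sqrt ((u y ^ 2 + w y ^ 2) / 2))
        (l • g + m • h) x := by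
      rw [hasGradientAt_iff_hasFDerivAt]
      exact hs'.congr_fderiv hfd
    exact hgr.gradient
  rw [hgrad]
  -- basic facts about H
  have Hnn : ∀ ξ, 0 ≤ H ξ := fun ξ => le_trans (by positivity) (hlow ξ)
  -- convexity inequality
  have hcvx : H (l • g + m • h) ≤ l * H g + m * H h := by
    have hs0 : (0:ℝ) < l + m := by linarith
    have hrep : (l+m) • ((l/(l+m)) • g + (m/(l+m)) • h) = l • g + m • h := by
      rw [smul_add, smul_smul, smul_smul]
      congr 2 <;> field_simp
    have h1 : H (l • g + m • h) = (l + m) * H ((l/(l+m)) • g + (m/(l+m)) • h) := by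
      rw [← hrep, hhom, abs_of_pos hs0]
    have h2 := hconv.2 (mem_univ g) (mem_univ h)
      (le_of_lt (by positivity : (0:ℝ) < l/(l+m)))
      (le_of_lt (by positivity : (0:ℝ) < m/(l+m)))
      (by field_simp)
    rw [h1]
    calc (l + m) * H ((l/(l+m)) • g + (m/(l+m)) • h)
        ≤ (l + m) * ((l/(l+m)) * H g + (m/(l+m)) * H h) := by
          exact mul_le_mul_of_nonneg_left h2 hs0.le
      _ = l * H g + m * H h := by field_simp
  have hcs : (l * H g + m * H h) ^ 2 ≤ (1/2) * (H g)^2 + (1/2) * (H h)^2 := by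
    nlinarith [sq_nonneg (l * H h - m * H g), hlm]
  constructor
  · nlinarith [Hnn (l • g + m • h), hcvx, hcs]
  · intro heq
    -- extract the two equalities
    have e1 : H (l • g + m • h) = l * H g + m * H h := by
      nlinarith [Hnn (l • g + m • h), hcvx, hcs]
    have e2 : l * H h = m * H g := by
      have eS : (l * H g + m * H h) ^ 2 = 1/2 * H g ^ 2 + 1/2 * H h ^ 2 := by
        rw [← e1]; exact heq
      have : (l * H h - m * H g) ^ 2 = 0 := by
        linear_combination (H g ^ 2 + H h ^ 2) * hlm - eS
      have := pow_eq_zero_iff (n := 2) (by norm_num) |>.mp this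
      linarith
    have e2' : u x * H h = w x * H g := by
      have h2φ : (0:ℝ) < 2 * φx := by linarith
      rw [hl, hm] at e2
      field_simp at e2
      linarith
    rcases eq_or_lt_of_le (Hnn g) with hg0 | hgpos
    · -- H g = 0 ⟹ g = 0, then H h = 0, h = 0
      have hgz : g = 0 := by
        have := hlow g
        have : ‖g‖ ≤ 0 := by nlinarith
        simpa using le_antisymm this (norm_nonneg g)
      have hhz : h = 0 := by
        have : H h = 0 := by
          have := e2'
          rw [← hg0] at this
          nlinarith
        have h2 := hlow h
        have : ‖h‖ ≤ 0 := by nlinarith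
        simpa using le_antisymm this (norm_nonneg h)
      rw [hgz, hhz, smul_zero, smul_zero]
    rcases eq_or_lt_of_le (Hnn h) with hh0 | hhpos
    · have hhz : h = 0 := by
        have := hlow h
        have : ‖h‖ ≤ 0 := by nlinarith
        simpa using le_antisymm this (norm_nonneg h)
      have hgz : g = 0 := by
        have : H g = 0 := by
          rw [← hh0] at e2'
          nlinarith
        have h2 := hlow g
        have : ‖g‖ ≤ 0 := by nlinarith
        simpa using le_antisymm this (norm_nonneg g)
      rw [hgz, hhz, smul_zero, smul_zero]
    -- main case: H g > 0, H h > 0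
    have hp : (H g)⁻¹ • g = (H g)⁻¹ • g := rfl
    set p := (H g)⁻¹ • g with hp'
    set q := (H h)⁻¹ • h with hq'
    have Hp : H p = 1 := by
      rw [hp', hhom, abs_of_pos (inv_pos.mpr hgpos), inv_mul_cancel₀ hgpos.ne']
    have Hq : H q = 1 := by
      rw [hq', hhom, abs_of_pos (inv_pos.mpr hhpos), inv_mul_cancel₀ hhpos.ne']
    have hpq : p = q := by
      by_contra hne
      set S := l * H g + m * H h with hS
      have hSpos : 0 < S := by positivity
      set t := l * H g / S with ht
      have htpos : 0 < t := by positivity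
      have ht1 : t < 1 := by
        rw [ht, div_lt_one hSpos]
        nlinarith
      have hsum : t + (1 - t) = 1 := by ring
      have hz := hsc 1 one_pos (by simp [Hp.le] : p ∈ {ξ | H ξ ≤ 1})
        (by simp [Hq.le] : q ∈ {ξ | H ξ ≤ 1}) hne htpos (by linarith) hsum
      set z := t • p + (1 - t) • q with hzdef
      -- H z < 1
      have hzmem' : z ∈ {ξ : EuclideanSpace ℝ (Fin n) | H ξ ≤ 1} := interior_subset hz
      have hzmem : H z ≤ 1 := hzmem'
      have hzlt : H z < 1 := by
        rcases lt_or_eq_of_le hzmem with h1 | h1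
        · exact h1
        · exfalso
          have hz0 : z ≠ 0 := by
            intro h0
            have hz00 : H z = 0 := by
              rw [h0]
              have := hhom 0 0
              simpa using this
            rw [h1] at hz00; norm_num at hz00
          rcases Metric.mem_nhds_iff.mp (mem_interior_iff_mem_nhds.mp hz) with ⟨ε, hε, hball⟩
          have hznorm : 0 < ‖z‖ := norm_pos_iff.mpr hz0
          set c := 1 + ε / (2 * ‖z‖) with hc
          have hεz : 0 < ε / (2 * ‖z‖) := div_pos hε (by linarith)
          have hc1 : 1 < c := by rw [hc]; linarith
          have hdist : dist (c • z) z = (c - 1) * ‖z‖ := by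
            rw [dist_eq_norm, show c • z - z = (c - 1) • z by rw [sub_smul, one_smul],
              norm_smul, Real.norm_eq_abs, abs_of_pos (by linarith : (0:ℝ) < c - 1)]
          have hmem : c • z ∈ Metric.ball z ε := by
            rw [Metric.mem_ball, hdist, hc]
            have hhalf : (1 + ε / (2 * ‖z‖) - 1) * ‖z‖ = ε / 2 := by
              field_simp
              ring
            rw [hhalf]
            linarith
          have hcz : H (c • z) ≤ 1 := hball hmem
          rw [hhom, abs_of_pos (by linarith : (0:ℝ) < c), h1, mul_one] at hcz
          linarith
      -- derive contradiction with e1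
      have hst : S * t = l * H g := by
        rw [ht]
        field_simp
      have hst' : S * (1 - t) = m * H h := by
        rw [mul_one_sub, hst, hS]
        ring
      have hSz : S • z = l • g + m • h := by
        rw [hzdef, hp', hq']
        match_scalars
        · field_simp [hgpos.ne']
          linarith [hst]
        · field_simp [hhpos.ne']
          linarith [hst']
      have : H (l • g + m • h) < S := by
        rw [← hSz, hhom, abs_of_pos hSpos]
        calc S * H z < S * 1 := by exact mul_lt_mul_of_pos_left hzlt hSpos
          _ = S := mul_one S
      rw [e1] at this
      exact absurd this (lt_irrefl S)
    -- p = q gives the conclusion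
    have hgp : g = H g • p := by
      rw [hp', smul_smul, mul_inv_cancel₀ hgpos.ne', one_smul]
    have hhq : h = H h • q := by
      rw [hq', smul_smul, mul_inv_cancel₀ hhpos.ne', one_smul]
    rw [hgp, hhq, ← hpq, hp']
    match_scalars
    field_simp [hux.ne', hwx.ne', hgpos.ne']
    linarith [e2']
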